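/- Let v be a TU game on 𝒜′ with κ-additive allocations: sup over nets (λ^i)_{i∈I} ⊆ ℝ₊^{(𝒜′)} with A(λ^i) → χ_N weakly and c(λ^i) → z of z is at most v(N), if and only if, sup over nets (λ^j)_{j∈J} ⊆ ℝ∗^{(𝒜′)} with A(λ^j) → χ_N weakly, c(λ^j) → z, and liminf λ^j_N > −∞, of z is at most v(N). Here ℝ∗^{(𝒜′)} allows the weight of the grand coalition N to be negative but all other weights nonnegative. -/

import Mathlib

open Filter Topology Set
open scoped Classical

section Defs

variable {N : Type}

/-- A field of sets over `N`. -/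
def IsSetField (𝒜 : Set (Set N)) : Prop :=
  Set.univ ∈ 𝒜 ∧ (∀ S ∈ 𝒜, Sᶜ ∈ 𝒜) ∧ ∀ S ∈ 𝒜, ∀ T ∈ 𝒜, S ∪ T ∈ 𝒜

/-- Finitely additive set function on `𝒜`. -/
def IsAdditiveOn (𝒜 : Set (Set N)) (μ : Set N → ℝ) : Prop :=
  μ ∅ = 0 ∧ ∀ S ∈ 𝒜, ∀ T ∈ 𝒜, Disjoint S T → μ (S ∪ T) = μ S + μ T

def IsBoundedOn (𝒜 : Set (Set N)) (μ : Set N → ℝ) : Prop :=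
  ∃ M : ℝ, ∀ S ∈ 𝒜, |μ S| ≤ M

/-- Upper κ-continuity: along every monotone decreasing κ-net with intersection `T ∈ 𝒜`,
`μ (S i) → μ T`. -/
def UpperKappaCont (𝒜 : Set (Set N)) (κ : Cardinal) (μ : Set N → ℝ) : Prop :=
  ∀ (I : Type) [Preorder I] [IsDirected I (· ≤ ·)] [Nonempty I],
    Cardinal.mk I ≤ κ → ∀ S : I → Set N, (∀ i, S i ∈ 𝒜) → Antitone S →
      ∀ T ∈ 𝒜, (⋂ i, S i) = T → Tendsto (fun i => μ (S i)) atTop (nhds (μ T))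

/-- Lower κ-continuity: along every monotone increasing κ-net with union `T ∈ 𝒜`,
`μ (S i) → μ T`. -/
def LowerKappaCont (𝒜 : Set (Set N)) (κ : Cardinal) (μ : Set N → ℝ) : Prop :=
  ∀ (I : Type) [Preorder I] [IsDirected I (· ≤ ·)] [Nonempty I],
    Cardinal.mk I ≤ κ → ∀ S : I → Set N, (∀ i, S i ∈ 𝒜) → Monotone S →
      ∀ T ∈ 𝒜, (⋃ i, S i) = T → Tendsto (fun i => μ (S i)) atTop (nhds (μ T))

def KappaCont (𝒜 : Set (Set N)) (κ : Cardinal) (μ : Set N → ℝ) : Prop :=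
  UpperKappaCont 𝒜 κ μ ∧ LowerKappaCont 𝒜 κ μ

/-- Membership in `ba^κ(𝒜)`: bounded, additive and κ-continuous. -/
def InBaKappa (𝒜 : Set (Set N)) (κ : Cardinal) (μ : Set N → ℝ) : Prop :=
  IsBoundedOn 𝒜 μ ∧ IsAdditiveOn 𝒜 μ ∧ KappaCont 𝒜 κ μ

/-- σ-additivity (countable additivity) of a set function on `𝒜`. -/
def IsSigmaAdditiveOn (𝒜 : Set (Set N)) (μ : Set N → ℝ) : Prop :=
  ∀ S : ℕ → Set N, (∀ n, S n ∈ 𝒜) → Pairwise (Function.onFun Disjoint S) →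
    (⋃ n, S n) ∈ 𝒜 → HasSum (fun n => μ (S n)) (μ (⋃ n, S n))

/-- Finitely supported weight system with support among the feasible coalitions. -/
def FinSuppOn (𝒜' : Set (Set N)) (lam : Set N → ℝ) : Prop :=
  (Function.support lam).Finite ∧ Function.support lam ⊆ 𝒜'

/-- The field hull (smallest field of sets containing `𝒜'`). -/
def FieldHull (𝒜' : Set (Set N)) : Set (Set N) :=
  ⋂₀ {ℬ : Set (Set N) | IsSetField ℬ ∧ 𝒜' ⊆ ℬ}

end Defs

/-- Lemma 4.8 of the paper: the supremum over nets of nonnegative balancing weight systems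
is at most v(N) iff the supremum over nets of weight systems whose grand-coalition weight may
be negative but has liminf > −∞ is at most v(N). Weak convergence is with respect to
ba^κ(𝒜), where 𝒜 is the field hull of 𝒜'. -/
theorem schmeidlerKappaBalanced_iff_boundedBelowVersion {N : Type} [Nonempty N]
    (𝒜' : Set (Set N)) (h0 : ∅ ∈ 𝒜') (hU : Set.univ ∈ 𝒜')
    (κ : Cardinal) (hκ : Cardinal.aleph0 ≤ κ)
    (v : Set N → ℝ) (hv : v ∅ = 0) :
    (∀ z : ℝ,
      (∃ (I : Type) (_ : Preorder I) (_ : IsDirected I (· ≤ ·)) (_ : Nonempty I)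
          (lam : I → Set N → ℝ),
        (∀ i, FinSuppOn 𝒜' (lam i)) ∧ (∀ i S, 0 ≤ lam i S) ∧
        (∀ μ : Set N → ℝ, InBaKappa (FieldHull 𝒜') κ μ →
          Tendsto (fun i => ∑ᶠ S, lam i S * μ S) atTop (nhds (μ Set.univ))) ∧
        Tendsto (fun i => ∑ᶠ S, lam i S * v S) atTop (nhds z)) → z ≤ v Set.univ)
    ↔
    (∀ z : ℝ,
      (∃ (J : Type) (_ : Preorder J) (_ : IsDirected J (· ≤ ·)) (_ : Nonempty J)
          (lam : J → Set N → ℝ),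
        (∀ j, FinSuppOn 𝒜' (lam j)) ∧ (∀ j S, S ≠ Set.univ → 0 ≤ lam j S) ∧
        (∀ μ : Set N → ℝ, InBaKappa (FieldHull 𝒜') κ μ →
          Tendsto (fun j => ∑ᶠ S, lam j S * μ S) atTop (nhds (μ Set.univ))) ∧
        Tendsto (fun j => ∑ᶠ S, lam j S * v S) atTop (nhds z) ∧
        (∃ B : ℝ, ∀ᶠ j in atTop, B ≤ lam j Set.univ)) → z ≤ v Set.univ) := by
  constructor
  · -- nonneg version implies bounded-below version
    intro H z hz
    obtain ⟨J, pJ, dJ, nJ, lam, hfin, hpos, hba, hvlim, B, hB⟩ := hz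
    rw [eventually_atTop] at hB
    obtain ⟨j0, hj0⟩ := hB
    set m : ℝ := max 0 (-B) with hm_def
    have hm0 : (0:ℝ) ≤ m := le_max_left _ _
    have hmB : -B ≤ m := le_max_right _ _
    have hm1 : (0:ℝ) < 1 + m := by linarith
    -- restrict to the subnet where the bound holds
    let J' := {j : J // j0 ≤ j}
    haveI : Nonempty J' := ⟨⟨j0, le_refl _⟩⟩
    haveI hdir : IsDirected J' (· ≤ ·) := ⟨fun a b => by
      obtain ⟨c, hca, hcb⟩ := directed_of (· ≤ ·) a.1 b.1
      exact ⟨⟨c, le_trans a.2 hca⟩, hca, hcb⟩⟩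
    have hmap : Tendsto (fun j' : J' => (j' : J)) atTop atTop := by
      rw [tendsto_atTop]
      intro b
      obtain ⟨c, hcb, hc0⟩ := directed_of (· ≤ ·) b j0
      filter_upwards [eventually_ge_atTop (⟨c, hc0⟩ : J')] with x hx
      exact le_trans hcb hx
    -- the modified weight system
    have h : (z + m * v Set.univ) / (1 + m) ≤ v Set.univ := by
      refine H _
        ⟨J', inferInstance, inferInstance, inferInstance,
          fun j S => (lam j.1 S + (if S = Set.univ then m else 0)) / (1 + m), ?_, ?_, ?_, ?_⟩
      · intro j
        obtain ⟨hf1, hf2⟩ := hfin j.1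
        constructor
        · apply Set.Finite.subset (hf1.union (Set.finite_singleton Set.univ))
          intro S hS
          by_cases h : S = Set.univ
          · exact Or.inr h
          · left
            simp only [Function.mem_support] at hS ⊢
            intro hc
            apply hS
            simp [h, hc]
        · intro S hS
          by_cases h : S = Set.univ
          · exact h ▸ hU
          · apply hf2
            simp only [Function.mem_support] at hS ⊢
            intro hc
            apply hS
            simp [h, hc]
      · intro j S
        by_cases h : S = Set.univ
        · subst h
          have := hj0 j.1 j.2
          have h2 : (0:ℝ) ≤ (lam j.1 Set.univ + m) / (1 + m) :=
            div_nonneg (by linarith) hm1.le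
          simpa using h2
        · have := hpos j.1 S h
          simp only [if_neg h, add_zero]
          exact div_nonneg this hm1.le
      · intro μ hμ
        have key : ∀ j : J,
            (∑ᶠ S, ((lam j S + (if S = Set.univ then m else 0)) / (1 + m)) * μ S)
            = ((∑ᶠ S, lam j S * μ S) + m * μ Set.univ) / (1 + m) := by
          intro j
          have heq : (fun S => ((lam j S + (if S = Set.univ then m else 0)) / (1 + m)) * μ S)
              = fun S => (lam j S * μ S) / (1 + m)
                + ((if S = Set.univ then m else 0) * μ S) / (1 + m) := by
            funext S; split_ifs <;> ring
          rw [heq, finsum_add_distrib, add_div]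
          · congr 1
            · have hsupp : (Function.support fun S => lam j S * μ S).Finite := (hfin j).1.subset (by
                intro S hS
                simp only [Function.mem_support] at hS ⊢
                intro hc; apply hS; simp [hc])
              simp only [div_eq_mul_inv]
              exact (finsum_mul _ _).symm
            · rw [finsum_eq_single _ Set.univ (fun S hS => by simp [if_neg hS])]
              simp
          · exact ((hfin j).1.subset (by
              intro S hS
              simp only [Function.mem_support] at hS ⊢
              intro hc; apply hS; simp [hc]))
          · apply Set.Finite.subset (Set.finite_singleton Set.univ)
            intro S hS
            simp only [Function.mem_support] at hS
            by_contra h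
            simp only [Set.mem_singleton_iff] at h
            apply hS; simp [if_neg h]
        simp only [key]
        have h1 : Tendsto (fun j' : J' => ((∑ᶠ S, lam (j' : J) S * μ S) + m * μ Set.univ)
            / (1 + m)) atTop (nhds ((μ Set.univ + m * μ Set.univ) / (1 + m))) :=
          (((hba μ hμ).comp hmap).add tendsto_const_nhds).div_const (1 + m)
        convert h1 using 2
        field_simp
      · have key : ∀ j : J,
            (∑ᶠ S, ((lam j S + (if S = Set.univ then m else 0)) / (1 + m)) * v S)
            = ((∑ᶠ S, lam j S * v S) + m * v Set.univ) / (1 + m) := by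
          intro j
          have heq : (fun S => ((lam j S + (if S = Set.univ then m else 0)) / (1 + m)) * v S)
              = fun S => (lam j S * v S) / (1 + m)
                + ((if S = Set.univ then m else 0) * v S) / (1 + m) := by
            funext S; split_ifs <;> ring
          rw [heq, finsum_add_distrib, add_div]
          · congr 1
            · have hsupp : (Function.support fun S => lam j S * v S).Finite := (hfin j).1.subset (by
                intro S hS
                simp only [Function.mem_support] at hS ⊢
                intro hc; apply hS; simp [hc])
              simp only [div_eq_mul_inv]
              exact (finsum_mul _ _).symm
            · rw [finsum_eq_single _ Set.univ (fun S hS => by simp [if_neg hS])]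
              simp
          · exact ((hfin j).1.subset (by
              intro S hS
              simp only [Function.mem_support] at hS ⊢
              intro hc; apply hS; simp [hc]))
          · apply Set.Finite.subset (Set.finite_singleton Set.univ)
            intro S hS
            simp only [Function.mem_support] at hS
            by_contra h
            simp only [Set.mem_singleton_iff] at h
            apply hS; simp [if_neg h]
        simp only [key]
        exact ((hvlim.comp hmap).add tendsto_const_nhds).div_const (1 + m)
    rw [div_le_iff₀ hm1] at h
    linarith
  · -- bounded-below version implies nonneg version
    intro H z hz
    obtain ⟨I, pI, dI, nI, lam, hfin, hpos, hba, hvlim⟩ := hz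
    exact H z ⟨I, pI, dI, nI, lam, hfin, fun i S _ => hpos i S, hba, hvlim,
      0, Eventually.of_forall fun i => hpos i Set.univ⟩
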